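/- Let $\Omega$ be a commutative semigroup, $(L, [\cdot,\cdot]_{\alpha,\beta})_{\alpha,\beta\in\Omega}$ an $\Omega$-Lie algebra, and $(R_\alpha)_{\alpha\in\Omega}$ a Rota-Baxter family of weight $\lambda$ on $L$. Define $[x,y]'_{\alpha,\beta} := [R_\alpha(x), y]_{\alpha,\beta} + [x, R_\beta(y)]_{\alpha,\beta} + \lambda[x,y]_{\alpha,\beta}$. Then $(L, [\cdot,\cdot]'_{\alpha,\beta})_{\alpha,\beta\in\Omega}$ is an $\Omega$-Lie algebra. -/
import Mathlib


/-- A Rota-Baxter family of weight λ on an Ω-Lie algebra induces a new Ω-Lie algebra. -/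
theorem stmt_14
    {K : Type*} [Field K] {Ω : Type*} [CommSemigroup Ω]
    {L : Type*} [AddCommGroup L] [Module K L]
    (br : Ω → Ω → L →ₗ[K] L →ₗ[K] L)
    (lam : K)
    -- (L, br) is an Ω-Lie algebra
    (hskew : ∀ (α β : Ω) (x y : L), br α β x y = - br β α y x)
    (hjac : ∀ (α β γ : Ω) (x y z : L),
      br α (β * γ) x (br β γ y z) + br β (γ * α) y (br γ α z x)
        + br γ (α * β) z (br α β x y) = 0)
    -- (R_α) is a Rota-Baxter family of weight λ
    (R : Ω → L →ₗ[K] L)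
    (hRB : ∀ (α β : Ω) (x y : L),
      br α β (R α x) (R β y)
        = R (α * β) (br α β (R α x) y + br α β x (R β y) + lam • br α β x y))
    -- the new bracket
    (nbr : Ω → Ω → L → L → L)
    (hnbr : ∀ (α β : Ω) (x y : L),
      nbr α β x y = br α β (R α x) y + br α β x (R β y) + lam • br α β x y) :
    -- (L, nbr) is an Ω-Lie algebra
    (∀ (α β : Ω) (x y : L), nbr α β x y = - nbr β α y x) ∧
    (∀ (α β γ : Ω) (x y z : L),
      nbr α (β * γ) x (nbr β γ y z) + nbr β (γ * α) y (nbr γ α z x)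
        + nbr γ (α * β) z (nbr α β x y) = 0) := by
  constructor
  · intro α β x y
    rw [hnbr, hnbr, hskew α β (R α x) y, hskew α β x (R β y), hskew α β x y]
    module
  · intro α β γ x y z
    simp only [hnbr, ← hRB, map_add, map_smul]
    have J1 := hjac α β γ (R α x) (R β y) z
    have J2 := hjac β γ α (R β y) (R γ z) x
    have J3 := hjac γ α β (R γ z) (R α x) y
    have J4 := hjac α β γ (R α x) y z
    have J5 := hjac β γ α (R β y) z x
    have J6 := hjac γ α β (R γ z) x y
    have J7 := hjac α β γ x y z
    linear_combination (norm := module) J1 + J2 + J3 + lam • J4 + lam • J5 + lam • J6 + lam • lam • J7
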